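/- The Sylvester map Φ(w₁,...,wₙ) = (x·w₁) ∗ ... ∗ (x·wₙ) satisfies Φ(ṽ₁,...,ṽₙ) = Φ(w₁,...,wₙ) if and only if there is a permutation σ ∈ Sₙ and real numbers c₁,...,cₙ with c₁⋯cₙ = 1 such that ṽ_k = c_k w_{σ(k)} for each k. -/

import Mathlib

open MvPolynomial

/-- The quadratic form `q(x,y,z) = x² + y² + z²`. -/
noncomputable def qForm : MvPolynomial (Fin 3) ℝ := ∑ i : Fin 3, X i ^ 2

/-- The Laplacian of a polynomial on `ℝ³`. -/
noncomputable def lap (p : MvPolynomial (Fin 3) ℝ) : MvPolynomial (Fin 3) ℝ :=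
  ∑ i : Fin 3, pderiv i (pderiv i p)

/-- A polynomial is harmonic if its Laplacian vanishes. -/
def Harmonic (p : MvPolynomial (Fin 3) ℝ) : Prop := lap p = 0

/-- `star` is a harmonic product: on harmonic polynomials, `star h₁ h₂` is the harmonic
projection `(h₁h₂)₀` of the ordinary product. -/
def IsHarmonicProduct (star : MvPolynomial (Fin 3) ℝ → MvPolynomial (Fin 3) ℝ →
    MvPolynomial (Fin 3) ℝ) : Prop :=
  ∀ h₁ h₂, Harmonic h₁ → Harmonic h₂ →
    Harmonic (star h₁ h₂) ∧ ∃ g, h₁ * h₂ - star h₁ h₂ = qForm * g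

/-- The linear form `x ↦ w · x` as a degree 1 polynomial. -/
noncomputable def linForm (w : Fin 3 → ℝ) : MvPolynomial (Fin 3) ℝ :=
  ∑ i : Fin 3, C (w i) * X i

/-- The Euler operator. -/
noncomputable def eulerOp (p : MvPolynomial (Fin 3) ℝ) : MvPolynomial (Fin 3) ℝ :=
  ∑ i : Fin 3, X i * pderiv i p

theorem coeff_pderiv (i : Fin 3) (m : Fin 3 →₀ ℕ) (p : MvPolynomial (Fin 3) ℝ) :
    coeff m (pderiv i p) = ((m i : ℝ) + 1) * coeff (m + Finsupp.single i 1) p := by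
  induction p using MvPolynomial.induction_on' with
  | add p q hp hq => simp [map_add, coeff_add, hp, hq]; ring
  | monomial s a =>
    rw [pderiv_monomial, coeff_monomial, coeff_monomial]
    rcases Nat.eq_zero_or_pos (s i) with h0 | hpos
    · have hne : ¬ s = m + Finsupp.single i 1 := by
        intro h
        have := congrArg (fun f => f i) h
        simp [h0] at this
      simp [hne, h0]
    · have hiff : s - Finsupp.single i 1 = m ↔ s = m + Finsupp.single i 1 := by
        constructor
        · intro h
          have hle : Finsupp.single i 1 ≤ s := by
            rw [Finsupp.single_le_iff]; exact hpos
          rw [← h, tsub_add_cancel_of_le hle]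
        · intro h; rw [h]; simp
      by_cases h : s = m + Finsupp.single i 1
      · rw [if_pos (hiff.2 h), if_pos h]
        have : s i = m i + 1 := by
          rw [h]; simp
        rw [this]; push_cast; ring
      · rw [if_neg (fun hh => h (hiff.1 hh)), if_neg h]; ring

theorem coeff_eulerOp (m : Fin 3 →₀ ℕ) (p : MvPolynomial (Fin 3) ℝ) :
    coeff m (eulerOp p) = (∑ i : Fin 3, (m i : ℝ)) * coeff m p := by
  rw [eulerOp, coeff_sum, Finset.sum_mul]
  apply Finset.sum_congr rfl
  intro i _
  rcases Nat.eq_zero_or_pos (m i) with h0 | hpos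
  · rw [coeff_X_mul']
    simp [Finsupp.mem_support_iff, h0]
  · have hmem : i ∈ m.support := by simp [Finsupp.mem_support_iff]; omega
    rw [coeff_X_mul' m i _, if_pos hmem, coeff_pderiv]
    have h1 : (m - Finsupp.single i 1 : Fin 3 →₀ ℕ) i = m i - 1 := by simp
    have h2 : m - Finsupp.single i 1 + Finsupp.single i 1 = m := by
      apply tsub_add_cancel_of_le
      rw [Finsupp.single_le_iff]; exact hpos
    rw [h1, h2]
    have : ((m i - 1 : ℕ) : ℝ) + 1 = (m i : ℝ) := by
      have := Nat.succ_pred_eq_of_pos hpos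
      push_cast [Nat.cast_sub hpos]
      ring
    rw [this]

theorem coeff_lap (m : Fin 3 →₀ ℕ) (p : MvPolynomial (Fin 3) ℝ) :
    coeff m (lap p) = ∑ i : Fin 3,
      ((m i : ℝ) + 1) * ((m i : ℝ) + 2) * coeff (m + Finsupp.single i 1 + Finsupp.single i 1) p := by
  rw [lap, coeff_sum]
  apply Finset.sum_congr rfl
  intro i _
  rw [coeff_pderiv, coeff_pderiv]
  have : (((m + Finsupp.single i 1 : Fin 3 →₀ ℕ) i : ℕ) : ℝ) + 1 = (m i : ℝ) + 2 := by
    rw [Finsupp.add_apply, Finsupp.single_apply, if_pos rfl]; push_cast; ring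
  rw [this]; ring

theorem lap_add (p q : MvPolynomial (Fin 3) ℝ) : lap (p + q) = lap p + lap q := by
  simp [lap, map_add, Finset.sum_add_distrib]

theorem lap_sub (p q : MvPolynomial (Fin 3) ℝ) : lap (p - q) = lap p - lap q := by
  simp [lap, map_sub, Finset.sum_sub_distrib]

/-- The commutator identity `Δ(Ep) = E(Δp) + 2Δp`. -/
theorem lap_eulerOp (p : MvPolynomial (Fin 3) ℝ) :
    lap (eulerOp p) = eulerOp (lap p) + 2 * lap p := by
  apply MvPolynomial.ext
  intro m
  rw [coeff_add, coeff_lap, coeff_eulerOp, coeff_lap]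
  have h2 : coeff m (2 * lap p) = 2 * coeff m (lap p) := by
    rw [two_mul, coeff_add]; ring
  rw [h2, coeff_lap, Finset.mul_sum, Finset.mul_sum, ← Finset.sum_add_distrib]
  apply Finset.sum_congr rfl
  intro i _
  rw [coeff_eulerOp]
  have : (∑ j : Fin 3, (((m + Finsupp.single i 1 + Finsupp.single i 1 : Fin 3 →₀ ℕ) j : ℕ) : ℝ))
      = (∑ j : Fin 3, (m j : ℝ)) + 2 := by
    rw [Fin.sum_univ_three, Fin.sum_univ_three]
    simp only [Finsupp.add_apply, Finsupp.single_apply]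
    fin_cases i <;> simp <;> push_cast <;> ring
  rw [this]; ring

theorem totalDegree_lap_lt (p : MvPolynomial (Fin 3) ℝ) (h : lap p ≠ 0) :
    (lap p).totalDegree < p.totalDegree := by
  have key : ∀ m ∈ (lap p).support, (m.sum fun _ e => e) + 2 ≤ p.totalDegree := by
    intro m hm
    rw [mem_support_iff, coeff_lap] at hm
    obtain ⟨i, -, hi⟩ := Finset.exists_ne_zero_of_sum_ne_zero hm
    have hc : coeff (m + Finsupp.single i 1 + Finsupp.single i 1) p ≠ 0 := by
      intro h0; rw [h0] at hi; simp at hi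
    have hle := le_totalDegree (mem_support_iff.2 hc)
    have hsum : ((m + Finsupp.single i 1 + Finsupp.single i 1).sum fun _ e => e)
        = (m.sum fun _ e => e) + 2 := by
      rw [Finsupp.sum_add_index' (fun _ => rfl) (fun _ _ _ => rfl),
        Finsupp.sum_add_index' (fun _ => rfl) (fun _ _ _ => rfl),
        Finsupp.sum_single_index rfl]
    omega
  obtain ⟨m₀, hm₀⟩ := MvPolynomial.support_nonempty.mpr h
  have h0 : 0 < p.totalDegree := by have := key m₀ hm₀; omega
  have hdef : (lap p).totalDegree = (lap p).support.sup fun s => s.sum fun _ e => e := rfl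
  rw [hdef]
  exact Finset.sup_lt_iff h0 |>.2 fun m hm => by have := key m hm; omega

theorem pderiv_qForm (i : Fin 3) : pderiv i qForm = 2 * X i := by
  rw [qForm, map_sum]
  fin_cases i <;>
    · rw [Fin.sum_univ_three]
      simp [pow_two, pderiv_mul, pderiv_X_self, pderiv_X_of_ne]
      ring

theorem lap_C_mul (a : ℝ) (g : MvPolynomial (Fin 3) ℝ) : lap (C a * g) = C a * lap g := by
  simp only [lap, pderiv_mul, pderiv_C, zero_mul, zero_add, Finset.mul_sum]

theorem lap_qForm_mul (g : MvPolynomial (Fin 3) ℝ) :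
    lap (qForm * g) = 6 * g + 4 * eulerOp g + qForm * lap g := by
  have step : ∀ i : Fin 3, pderiv i (pderiv i (qForm * g)) =
      2 * g + 4 * (X i * pderiv i g) + qForm * pderiv i (pderiv i g) := by
    intro i
    simp only [pderiv_mul, map_add, pderiv_qForm, pderiv_X_self, map_ofNat, pderiv_one,
      map_mul]
    have h2 : pderiv i (2 : MvPolynomial (Fin 3) ℝ) = 0 := by
      rw [← map_ofNat (C : ℝ →+* MvPolynomial (Fin 3) ℝ) 2]
      exact pderiv_C
    rw [h2]
    ring
  rw [show lap (qForm * g) = ∑ i : Fin 3, pderiv i (pderiv i (qForm * g)) from rfl]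
  calc (∑ i : Fin 3, pderiv i (pderiv i (qForm * g)))
      = ∑ i : Fin 3, (2 * g + 4 * (X i * pderiv i g) + qForm * pderiv i (pderiv i g)) :=
        Finset.sum_congr rfl fun i _ => step i
    _ = 6 * g + 4 * eulerOp g + qForm * lap g := by
        simp only [eulerOp, lap, Fin.sum_univ_three]
        ring

/-- If `a g + b (Eg) = 0` with `a, b > 0` then `g = 0`. -/
theorem eq_zero_of_euler (a b : ℝ) (ha : 0 < a) (hb : 0 < b) (g : MvPolynomial (Fin 3) ℝ)
    (h : C a * g + C b * eulerOp g = 0) : g = 0 := by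
  apply MvPolynomial.ext
  intro m
  have := congrArg (coeff m) h
  rw [coeff_add, coeff_C_mul, coeff_C_mul, coeff_eulerOp, coeff_zero] at this
  have hpos : 0 < a + b * (∑ i : Fin 3, (m i : ℝ)) := by
    have : (0:ℝ) ≤ ∑ i : Fin 3, (m i : ℝ) := Finset.sum_nonneg fun i _ => Nat.cast_nonneg _
    nlinarith
  have : (a + b * (∑ i : Fin 3, (m i : ℝ))) * coeff m g = 0 := by linarith [this]
  rcases mul_eq_zero.1 this with h' | h'
  · exact absurd h' (ne_of_gt hpos)
  · simpa using h'

/-- Key lemma: `a g + b Eg + q Δg = 0` with `a, b > 0` forces `g = 0`. -/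
theorem key_lemma (N : ℕ) : ∀ g : MvPolynomial (Fin 3) ℝ, g.totalDegree ≤ N →
    ∀ a b : ℝ, 0 < a → 0 < b →
    C a * g + C b * eulerOp g + qForm * lap g = 0 → g = 0 := by
  induction N using Nat.strong_induction_on with
  | _ N ih =>
    intro g hdeg a b ha hb heq
    by_cases hlap : lap g = 0
    · apply eq_zero_of_euler a b ha hb
      rw [hlap, mul_zero, add_zero] at heq
      exact heq
    · exfalso
      -- apply lap to the equation
      have h2 : C (a + 2*b + 6) * lap g + C (b + 4) * eulerOp (lap g) + qForm * lap (lap g) = 0 := by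
        have h0 : lap (0 : MvPolynomial (Fin 3) ℝ) = 0 := by simp [lap]
        have h3 := congrArg lap heq
        rw [lap_add, lap_add, lap_C_mul, lap_C_mul, lap_eulerOp, lap_qForm_mul, h0] at h3
        simp only [map_add, map_mul, map_ofNat] at h3 ⊢
        linear_combination h3
      have hlt : (lap g).totalDegree < N := by
        have := totalDegree_lap_lt g hlap
        omega
      have := ih _ hlt (lap g) (le_refl _) (a + 2*b + 6) (b + 4) (by linarith) (by linarith) h2
      exact hlap this


theorem harmonic_one : Harmonic (1 : MvPolynomial (Fin 3) ℝ) := by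
  simp [Harmonic, lap, pderiv_one]

theorem harmonic_linForm (w : Fin 3 → ℝ) : Harmonic (linForm w) := by
  have h1 : ∀ i : Fin 3, pderiv i (linForm w) = C (w i) := by
    intro i
    rw [linForm, map_sum]
    fin_cases i <;>
      · rw [Fin.sum_univ_three]
        simp [pderiv_mul, pderiv_X_self, pderiv_X_of_ne, pderiv_C]
  simp [Harmonic, lap, h1, pderiv_C]

/-- If two harmonic polynomials differ by a multiple of `qForm`, they are equal. -/
theorem harmonic_unique {h₁ h₂ g : MvPolynomial (Fin 3) ℝ} (hh₁ : Harmonic h₁)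
    (hh₂ : Harmonic h₂) (hg : h₁ - h₂ = qForm * g) : h₁ = h₂ := by
  have hlap : lap (qForm * g) = 0 := by
    rw [← hg, lap_sub, hh₁, hh₂, sub_zero]
  rw [lap_qForm_mul] at hlap
  have h6 : (6 : MvPolynomial (Fin 3) ℝ) = C 6 := by
    rw [map_ofNat (C : ℝ →+* MvPolynomial (Fin 3) ℝ) 6]
  have h4 : (4 : MvPolynomial (Fin 3) ℝ) = C 4 := by
    rw [map_ofNat (C : ℝ →+* MvPolynomial (Fin 3) ℝ) 4]
  rw [h6, h4] at hlap
  have hg0 : g = 0 :=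
    key_lemma g.totalDegree g (le_refl _) 6 4 (by norm_num) (by norm_num) hlap
  have : h₁ - h₂ = 0 := by rw [hg, hg0, mul_zero]
  exact sub_eq_zero.1 this

/-- The fold computes a harmonic polynomial congruent to the product mod `qForm`. -/
theorem fold_spec (star : MvPolynomial (Fin 3) ℝ → MvPolynomial (Fin 3) ℝ →
      MvPolynomial (Fin 3) ℝ) (hstar : IsHarmonicProduct star) :
    ∀ n (w : Fin n → (Fin 3 → ℝ)),
      Harmonic ((List.ofFn fun i => linForm (w i)).foldr star 1) ∧
      ∃ g, (∏ i, linForm (w i)) - (List.ofFn fun i => linForm (w i)).foldr star 1 = qForm * g := by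
  intro n
  induction n with
  | zero =>
    intro w
    simp only [List.ofFn_zero, List.foldr_nil]
    exact ⟨harmonic_one, 0, by simp⟩
  | succ n ih =>
    intro w
    obtain ⟨hH, g, hg⟩ := ih (fun i => w i.succ)
    rw [List.ofFn_succ, List.foldr_cons]
    set rest := (List.ofFn fun i => linForm (w i.succ)).foldr star 1 with hrest
    obtain ⟨hH', g₁, hg₁⟩ := hstar (linForm (w 0)) rest (harmonic_linForm _) hH
    refine ⟨hH', linForm (w 0) * g + g₁, ?_⟩
    rw [Fin.prod_univ_succ]
    have : linForm (w 0) * (∏ i : Fin n, linForm (w i.succ)) - linForm (w 0) * rest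
        = qForm * (linForm (w 0) * g) := by
      rw [← mul_sub, hg]; ring
    calc linForm (w 0) * (∏ i : Fin n, linForm (w i.succ)) - star (linForm (w 0)) rest
        = (linForm (w 0) * (∏ i : Fin n, linForm (w i.succ)) - linForm (w 0) * rest)
          + (linForm (w 0) * rest - star (linForm (w 0)) rest) := by ring
      _ = qForm * (linForm (w 0) * g) + qForm * g₁ := by rw [this, hg₁]
      _ = qForm * (linForm (w 0) * g + g₁) := by ring

/-- The parametrization of the complex null cone. -/
noncomputable def coneMap : Fin 3 → Polynomial ℂ :=
  ![Polynomial.X ^ 2 - 1, Polynomial.C Complex.I * (Polynomial.X ^ 2 + 1),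
    Polynomial.C 2 * Polynomial.X]

/-- Substitution into the cone parametrization. -/
noncomputable def Ψ : MvPolynomial (Fin 3) ℝ →ₐ[ℝ] Polynomial ℂ :=
  MvPolynomial.aeval coneMap

/-- The binary quadratic associated to a vector. -/
noncomputable def Qp (u : Fin 3 → ℝ) : Polynomial ℂ :=
  Polynomial.C ((u 0 : ℂ) + u 1 * Complex.I) * Polynomial.X ^ 2 +
    Polynomial.C (2 * u 2 : ℂ) * Polynomial.X +
    Polynomial.C (-(u 0) + u 1 * Complex.I)

theorem Psi_qForm : Ψ qForm = 0 := by
  simp only [Ψ, qForm, map_sum, map_pow, aeval_X]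
  rw [Fin.sum_univ_three]
  simp only [coneMap, Matrix.cons_val_zero, Matrix.cons_val_one, Matrix.head_cons,
    Matrix.cons_val_two, Matrix.tail_cons]
  have hI : (Polynomial.C Complex.I) ^ 2 = -1 := by
    rw [← map_pow, Complex.I_sq, map_neg, map_one]
  ring_nf
  rw [hI]
  have h2 : (Polynomial.C 2 : Polynomial ℂ) ^ 2 = 4 := by
    rw [← map_pow]; norm_num; rw [map_ofNat]
  rw [h2]
  ring

theorem Psi_linForm (w : Fin 3 → ℝ) : Ψ (linForm w) = Qp w := by
  simp only [Ψ, linForm, map_sum, map_mul, aeval_X, aeval_C]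
  rw [Fin.sum_univ_three]
  simp only [coneMap, Matrix.cons_val_zero, Matrix.cons_val_one, Matrix.head_cons,
    Matrix.cons_val_two, Matrix.tail_cons, Qp]
  have halg : ∀ r : ℝ, algebraMap ℝ (Polynomial ℂ) r = Polynomial.C (r : ℂ) := by
    intro r
    rw [Polynomial.algebraMap_apply]
    norm_num
  rw [halg, halg, halg]
  simp only [map_add, map_mul, map_neg, map_ofNat]
  ring

theorem eval_Qp (u : Fin 3 → ℝ) (z : ℂ) :
    Polynomial.eval z (Qp u) =
      ((u 0 : ℂ) + u 1 * Complex.I) * z ^ 2 + (2 * u 2) * z + (-(u 0) + u 1 * Complex.I) := by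
  simp [Qp]

theorem Qp_ne_zero {u : Fin 3 → ℝ} (hu : u ≠ 0) : Qp u ≠ 0 := by
  intro h
  have c0 := congrArg (Polynomial.coeff · 0) h
  have c1 := congrArg (Polynomial.coeff · 1) h
  have c2 := congrArg (Polynomial.coeff · 2) h
  simp only [Qp, Polynomial.coeff_add, Polynomial.coeff_C_mul, Polynomial.coeff_X_pow,
    Polynomial.coeff_X, Polynomial.coeff_C, Polynomial.coeff_zero] at c0 c1 c2
  norm_num at c0 c1 c2
  apply hu
  have h0 : u 0 = 0 := by
    have : (u 0 : ℂ) = 0 := by linear_combination (c2 - c0) / 2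
    exact_mod_cast this
  have h1 : u 1 = 0 := by
    have : (u 1 : ℂ) = 0 := by linear_combination (-Complex.I / 2) * (c0 + c2) + (u 1 : ℂ) * Complex.I_sq
    exact_mod_cast this
  funext i; fin_cases i <;> simp [h0, h1, c1]

theorem Qp_smul (c : ℝ) (u : Fin 3 → ℝ) : Qp (c • u) = Polynomial.C (c : ℂ) * Qp u := by
  simp only [Qp, Pi.smul_apply, smul_eq_mul]
  push_cast
  simp only [map_add, map_mul, map_neg]
  ring

theorem re_im_zero {a b : ℝ} (h : (a : ℂ) + b * Complex.I = 0) : a = 0 ∧ b = 0 := by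
  have h1 := congrArg Complex.re h
  have h2 := congrArg Complex.im h
  simp at h1 h2
  exact ⟨h1, h2⟩

theorem second_root {u : Fin 3 → ℝ} {z : ℂ} (hz : z ≠ 0)
    (h : Polynomial.eval z (Qp u) = 0) :
    Polynomial.eval (-((starRingEnd ℂ) z)⁻¹) (Qp u) = 0 := by
  rw [eval_Qp] at h ⊢
  have hzc : (starRingEnd ℂ) z ≠ 0 := by simpa using hz
  have hconj := congrArg (starRingEnd ℂ) h
  simp only [map_add, map_mul, map_pow, map_neg, map_zero, Complex.conj_ofReal,
    Complex.conj_I, map_ofNat] at hconj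
  set t := (starRingEnd ℂ) z with ht
  have ht2 : t ^ 2 ≠ 0 := pow_ne_zero _ hzc
  have key : (((u 0 : ℂ) + u 1 * Complex.I) * (-t⁻¹) ^ 2 + 2 * u 2 * (-t⁻¹) +
      (-(u 0) + u 1 * Complex.I)) * t ^ 2 = 0 := by
    have expand : (((u 0 : ℂ) + u 1 * Complex.I) * (-t⁻¹) ^ 2 + 2 * u 2 * (-t⁻¹) +
        (-(u 0) + u 1 * Complex.I)) * t ^ 2
        = -(((u 0 : ℂ) + u 1 * -Complex.I) * t ^ 2 + 2 * u 2 * t + (-(u 0) + u 1 * -Complex.I)) := by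
      field_simp
      ring
    rw [expand, hconj, neg_zero]
  exact (mul_eq_zero.1 key).resolve_right ht2

theorem exists_root_Qp (u : Fin 3 → ℝ) : ∃ z, Polynomial.eval z (Qp u) = 0 := by
  by_cases hA : (u 0 : ℂ) + u 1 * Complex.I = 0
  · obtain ⟨h0, h1⟩ := re_im_zero hA
    exact ⟨0, by rw [eval_Qp]; simp [h0, h1]⟩
  · have hdeg : (Qp u).degree = 2 := Polynomial.degree_quadratic hA
    obtain ⟨z, hz⟩ := IsAlgClosed.exists_root (Qp u) (by rw [hdeg]; exact (by decide))
    exact ⟨z, hz⟩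

theorem prop_of_common_root {u v : Fin 3 → ℝ} (hu : u ≠ 0) (hv : v ≠ 0) {z : ℂ}
    (hzu : Polynomial.eval z (Qp u) = 0) (hzv : Polynomial.eval z (Qp v) = 0) :
    ∃ c : ℝ, c ≠ 0 ∧ u = c • v := by
  by_cases hz : z = 0
  · subst hz
    rw [eval_Qp] at hzu hzv
    norm_num at hzu hzv
    have hu' := re_im_zero (show ((-u 0 : ℝ) : ℂ) + u 1 * Complex.I = 0 by push_cast; linear_combination hzu)
    have hv' := re_im_zero (show ((-v 0 : ℝ) : ℂ) + v 1 * Complex.I = 0 by push_cast; linear_combination hzv)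
    have hu0 : u 0 = 0 := by linarith [hu'.1]
    have hu1 : u 1 = 0 := hu'.2
    have hv0 : v 0 = 0 := by linarith [hv'.1]
    have hv1 : v 1 = 0 := hv'.2
    have hv2 : v 2 ≠ 0 := by
      intro h; apply hv; funext i; fin_cases i <;> simp [hv0, hv1, h]
    have hu2 : u 2 ≠ 0 := by
      intro h; apply hu; funext i; fin_cases i <;> simp [hu0, hu1, h]
    refine ⟨u 2 / v 2, div_ne_zero hu2 hv2, ?_⟩
    funext i; fin_cases i <;> simp [hu0, hu1, hv0, hv1]
    field_simp
  · -- nondegenerate case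
    have hAu : (u 0 : ℂ) + u 1 * Complex.I ≠ 0 := by
      intro hA
      obtain ⟨h0, h1⟩ := re_im_zero hA
      rw [eval_Qp] at hzu
      simp [h0, h1] at hzu
      rcases hzu with h | h
      · apply hu; funext i; fin_cases i <;> simp [h0, h1, h]
      · exact hz h
    have hAv : (v 0 : ℂ) + v 1 * Complex.I ≠ 0 := by
      intro hA
      obtain ⟨h0, h1⟩ := re_im_zero hA
      rw [eval_Qp] at hzv
      simp [h0, h1] at hzv
      rcases hzv with h | h
      · apply hv; funext i; fin_cases i <;> simp [h0, h1, h]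
      · exact hz h
    set s : ℂ := -((starRingEnd ℂ) z)⁻¹ with hs
    have hsu := second_root hz hzu
    have hsv := second_root hz hzv
    rw [eval_Qp] at hzu hzv hsu hsv
    have hzs : z ≠ s := by
      intro h
      have hzc : (starRingEnd ℂ) z ≠ 0 := by simpa using hz
      have : z * (starRingEnd ℂ) z = -1 := by
        rw [hs] at h
        field_simp at h
        linear_combination h
      rw [Complex.mul_conj] at this
      have := congrArg Complex.re this
      simp at this
      nlinarith [Complex.normSq_nonneg z, this]
    set Au : ℂ := (u 0 : ℂ) + u 1 * Complex.I
    set Bu : ℂ := (2 * u 2 : ℂ)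
    set Cu : ℂ := (-(u 0) : ℂ) + u 1 * Complex.I
    set Av : ℂ := (v 0 : ℂ) + v 1 * Complex.I
    set Bv : ℂ := (2 * v 2 : ℂ)
    set Cv : ℂ := (-(v 0) : ℂ) + v 1 * Complex.I
    have h5 : (Av * Bu - Au * Bv) * (z - s) = 0 := by
      linear_combination Av * hzu - Au * hzv - Av * hsu + Au * hsv
    have hβ : Av * Bu = Au * Bv := by
      rcases mul_eq_zero.1 h5 with h | h
      · linear_combination h
      · exact absurd (sub_eq_zero.1 h) hzs
    have hγ : Av * Cu = Au * Cv := by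
      linear_combination Av * hzu - Au * hzv - z * hβ
    set lam : ℂ := Au / Av with hlam
    have hA : Au = lam * Av := by
      rw [hlam, div_mul_cancel₀ _ hAv]
    have hB : Bu = lam * Bv := by
      rw [hlam, div_mul_eq_mul_div, eq_div_iff hAv]; linear_combination hβ
    have hC : Cu = lam * Cv := by
      rw [hlam, div_mul_eq_mul_div, eq_div_iff hAv]; linear_combination hγ
    have h0 : (u 0 : ℂ) = lam * v 0 := by linear_combination (hA - hC) / 2
    have h1 : (u 1 : ℂ) = lam * v 1 := by
      linear_combination (-Complex.I / 2) * (hA + hC) + ((u 1 : ℂ) - lam * v 1) * Complex.I_sq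
    have h2 : (u 2 : ℂ) = lam * v 2 := by linear_combination hB / 2
    have him : lam.im = 0 := by
      obtain ⟨i, hi⟩ : ∃ i, v i ≠ 0 := by
        by_contra hno
        push_neg at hno
        exact hv (funext fun i => hno i)
      have hcomp : (u i : ℂ) = lam * v i := by fin_cases i <;> assumption
      have := congrArg Complex.im hcomp
      simp [Complex.mul_im] at this
      rcases this with h | h
      · exact h
      · exact absurd h hi
    have hre : lam = ((lam.re : ℝ) : ℂ) := by
      apply Complex.ext <;> simp [him]
    refine ⟨lam.re, ?_, ?_⟩
    · intro h
      apply hAu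
      rw [hA, hre, h]
      simp
    · funext i
      have hcomp : (u i : ℂ) = lam * v i := by fin_cases i <;> assumption
      rw [hre] at hcomp
      have : (u i : ℂ) = ((lam.re * v i : ℝ) : ℂ) := by push_cast; linear_combination hcomp
      have := Complex.ofReal_inj.1 this
      simpa using this

theorem match_lemma : ∀ n (w w' : Fin n → (Fin 3 → ℝ)), (∀ i, w i ≠ 0) → (∀ i, w' i ≠ 0) →
    ∀ lam : ℝ, lam ≠ 0 →
    (∏ i, Qp (w' i)) = Polynomial.C (lam : ℂ) * ∏ i, Qp (w i) →
    ∃ σ : Equiv.Perm (Fin n), ∃ c : Fin n → ℝ,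
      (∏ i, c i) = lam ∧ ∀ k, w' k = c k • w (σ k) := by
  intro n
  induction n with
  | zero =>
    intro w w' hw hw' lam hlam heq
    simp only [Finset.univ_eq_empty, Finset.prod_empty, mul_one] at heq
    have : (lam : ℂ) = 1 := by
      have := congrArg (Polynomial.coeff · 0) heq
      simpa using this.symm
    have hlam1 : lam = 1 := by exact_mod_cast this
    exact ⟨Equiv.refl _, fun i => 1, by simp [hlam1], fun k => k.elim0⟩
  | succ n ih =>
    intro w w' hw hw' lam hlam heq
    -- find a common root of `Qp (w' 0)` and some `Qp (w j)`
    obtain ⟨z, hz⟩ := exists_root_Qp (w' 0)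
    have hzprod : (∏ i, Polynomial.eval z (Qp (w i))) = 0 := by
      have := congrArg (Polynomial.eval z) heq
      rw [Polynomial.eval_mul, Polynomial.eval_C, Polynomial.eval_prod,
        Polynomial.eval_prod] at this
      have hL : (∏ i, Polynomial.eval z (Qp (w' i))) = 0 :=
        Finset.prod_eq_zero (Finset.mem_univ 0) hz
      rw [hL] at this
      rcases mul_eq_zero.1 this.symm with h | h
      · exact absurd (by exact_mod_cast h) hlam
      · exact h
    obtain ⟨j, -, hj⟩ := Finset.prod_eq_zero_iff.1 hzprod
    obtain ⟨c₀, hc₀, hw0⟩ := prop_of_common_root (hw' 0) (hw j) hz hj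
    -- cancel the matched factor
    have hQ0 : Qp (w' 0) = Polynomial.C (c₀ : ℂ) * Qp (w j) := by
      rw [hw0, Qp_smul]
    have heq' : (∏ i : Fin n, Qp (w' i.succ)) =
        Polynomial.C ((lam / c₀ : ℝ) : ℂ) * ∏ i : Fin n, Qp (w (j.succAbove i)) := by
      have e1 : (∏ i, Qp (w' i)) = Qp (w' 0) * ∏ i : Fin n, Qp (w' i.succ) :=
        Fin.prod_univ_succ _
      have e2 : (∏ i, Qp (w i)) = Qp (w j) * ∏ i : Fin n, Qp (w (j.succAbove i)) :=
        Fin.prod_univ_succAbove _ j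
      rw [e1, e2, hQ0] at heq
      have hcC : (Polynomial.C (c₀ : ℂ)) ≠ 0 := by
        simpa [Polynomial.C_eq_zero] using (by exact_mod_cast hc₀ : (c₀ : ℂ) ≠ 0)
      have hQj : Qp (w j) ≠ 0 := Qp_ne_zero (hw j)
      apply mul_left_cancel₀ (mul_ne_zero hcC hQj)
      have hcc : Polynomial.C (c₀:ℂ) * Polynomial.C ((lam / c₀ : ℝ):ℂ) = Polynomial.C ((lam:ℝ):ℂ) := by
        rw [← Polynomial.C_mul]
        congr 1
        have hc₀C : (c₀:ℂ) ≠ 0 := by exact_mod_cast hc₀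
        push_cast
        field_simp
      rw [heq, ← hcc]
      ring
    obtain ⟨σ', c', hc'prod, hc'⟩ := ih (fun i => w (j.succAbove i)) (fun i => w' i.succ)
      (fun i => hw _) (fun i => hw' _) (lam / c₀) (div_ne_zero hlam hc₀) heq'
    refine ⟨((finSuccEquiv' 0).trans ((Equiv.optionCongr σ').trans (finSuccEquiv' j).symm)),
      Fin.cons c₀ c', ?_, ?_⟩
    · rw [Fin.prod_univ_succ]
      simp only [Fin.cons_zero, Fin.cons_succ]
      rw [hc'prod]
      field_simp
    · intro k
      refine Fin.cases ?_ ?_ k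
      · have hσ0 : ((finSuccEquiv' 0).trans ((Equiv.optionCongr σ').trans
            (finSuccEquiv' j).symm)) 0 = j := by
          simp [Equiv.trans_apply, finSuccEquiv'_at, finSuccEquiv'_symm_none]
        rw [hσ0]
        simpa using hw0
      · intro i
        have hσi : ((finSuccEquiv' 0).trans ((Equiv.optionCongr σ').trans
            (finSuccEquiv' j).symm)) i.succ = j.succAbove (σ' i) := by
          have h1 : (finSuccEquiv' (0 : Fin (n+1))) i.succ = some i := by
            rw [← Fin.zero_succAbove i, finSuccEquiv'_succAbove]
          simp [Equiv.trans_apply, h1, finSuccEquiv'_symm_some]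
        rw [hσi]
        simpa using hc' i

theorem linForm_smul (c : ℝ) (v : Fin 3 → ℝ) : linForm (c • v) = C c * linForm v := by
  simp only [linForm, Pi.smul_apply, smul_eq_mul, Finset.mul_sum, map_mul, mul_assoc]


/-- **The fibers of the Sylvester map** `Φ(w₁,…,wₙ) = (x·w₁) ∗ ⋯ ∗ (x·wₙ)`:
for nonzero vectors, `Φ(ṽ₁,…,ṽₙ) = Φ(w₁,…,wₙ)` iff there are a permutation `σ` and reals
`c₁,…,cₙ` with `c₁⋯cₙ = 1` such that `ṽ_k = c_k w_{σ(k)}` for all `k`. -/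
theorem sylvester_fiber (star : MvPolynomial (Fin 3) ℝ → MvPolynomial (Fin 3) ℝ →
      MvPolynomial (Fin 3) ℝ) (hstar : IsHarmonicProduct star)
    (n : ℕ) (w w' : Fin n → (Fin 3 → ℝ))
    (hw : ∀ i, w i ≠ 0) (hw' : ∀ i, w' i ≠ 0) :
    (List.ofFn fun i => linForm (w' i)).foldr star 1 =
        (List.ofFn fun i => linForm (w i)).foldr star 1 ↔
      ∃ σ : Equiv.Perm (Fin n), ∃ c : Fin n → ℝ,
        (∏ i : Fin n, c i) = 1 ∧ ∀ k, w' k = c k • w (σ k) := by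
  obtain ⟨hH', g', hg'⟩ := fold_spec star hstar n w'
  obtain ⟨hH, g, hg⟩ := fold_spec star hstar n w
  constructor
  · intro hfold
    have hdiff : (∏ i, linForm (w' i)) - (∏ i, linForm (w i)) = qForm * (g' - g) := by
      linear_combination hg' - hg + hfold
    have hPsi := congrArg Ψ hdiff
    rw [map_sub, map_mul, Psi_qForm, zero_mul, map_prod, map_prod] at hPsi
    simp only [Psi_linForm] at hPsi
    have heq : (∏ i, Qp (w' i)) = Polynomial.C ((1:ℝ):ℂ) * ∏ i, Qp (w i) := by
      push_cast
      rw [map_one, one_mul]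
      exact sub_eq_zero.1 hPsi
    exact match_lemma n w w' hw hw' 1 one_ne_zero heq
  · rintro ⟨σ, c, hprod, hcw⟩
    have hP : (∏ i, linForm (w' i)) = ∏ i, linForm (w i) := by
      calc (∏ i, linForm (w' i)) = ∏ i, (C (c i) * linForm (w (σ i))) :=
            Finset.prod_congr rfl fun i _ => by rw [hcw i, linForm_smul]
        _ = (∏ i, C (c i)) * ∏ i, linForm (w (σ i)) := Finset.prod_mul_distrib
        _ = C (∏ i, c i) * ∏ i, linForm (w i) := by
            rw [← map_prod, Equiv.prod_comp σ (fun i => linForm (w i))]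
        _ = ∏ i, linForm (w i) := by rw [hprod, map_one, one_mul]
    exact harmonic_unique (g := g - g') hH' hH (by linear_combination -hg' + hg + hP)
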